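/- Let A be an n×n symmetric positive semi-definite matrix with all eigenvalues at most 1, and let B be an n×n symmetric positive semi-definite matrix. Then log det(I + A·B) ≤ n·log(1 + tr(B)/n). -/

import Mathlib

open Matrix Finset
open scoped MatrixOrder

lemma psd_trace_nonneg' {n : ℕ} {R : Matrix (Fin n) (Fin n) ℝ} (hR : R.PosSemidef) :
    0 ≤ R.trace := by
  rw [Matrix.trace]; apply Finset.sum_nonneg; intro i _
  have := hR.dotProduct_mulVec_nonneg (Pi.single i 1)
  simpa [dotProduct, Matrix.mulVec, Pi.single_apply, Matrix.diag] using this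

lemma trace_mul_nonneg' {n : ℕ} {P Q : Matrix (Fin n) (Fin n) ℝ}
    (hP : P.PosSemidef) (hQ : Q.PosSemidef) : 0 ≤ (P * Q).trace := by
  have h1 : P * Q = CFC.sqrt P * (CFC.sqrt P * Q) := by rw [← mul_assoc, CFC.sqrt_mul_sqrt_self P hP.nonneg]
  rw [h1, Matrix.trace_mul_comm]
  have hpsd : (CFC.sqrt P * Q * CFC.sqrt P).PosSemidef := by
    have := hQ.mul_mul_conjTranspose_same (CFC.sqrt P)
    rwa [(CFC.sqrt_nonneg P).posSemidef.1.eq] at this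
  exact psd_trace_nonneg' hpsd

lemma one_sub_psd' {n : ℕ} {A : Matrix (Fin n) (Fin n) ℝ} (hA : A.PosSemidef)
    (h1 : ∀ i, hA.1.eigenvalues i ≤ 1) : (1 - A).PosSemidef := by
  have hU : A = (hA.1.eigenvectorUnitary : Matrix (Fin n) (Fin n) ℝ) *
      Matrix.diagonal (RCLike.ofReal ∘ hA.1.eigenvalues) *
      (star (hA.1.eigenvectorUnitary : Matrix (Fin n) (Fin n) ℝ)) := hA.1.spectral_theorem
  set U : Matrix (Fin n) (Fin n) ℝ := (hA.1.eigenvectorUnitary : Matrix (Fin n) (Fin n) ℝ) with hUdef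
  have hUU : U * star U = 1 := Matrix.mem_unitaryGroup_iff.mp hA.1.eigenvectorUnitary.2
  have key : U * Matrix.diagonal (fun i => 1 - hA.1.eigenvalues i) * star U = 1 - A := by
    have hd1 : Matrix.diagonal (fun i : Fin n => 1 - hA.1.eigenvalues i)
        = 1 - Matrix.diagonal (RCLike.ofReal ∘ hA.1.eigenvalues) := by
      rw [← Matrix.diagonal_one, ← Matrix.diagonal_sub]; rfl
    rw [hd1, Matrix.mul_sub, mul_one, Matrix.sub_mul, hUU, ← hU]
  rw [← key]
  have hd : (Matrix.diagonal (fun i => 1 - hA.1.eigenvalues i)).PosSemidef :=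
    Matrix.posSemidef_diagonal_iff.mpr (fun i => sub_nonneg.mpr (h1 i))
  have := hd.mul_mul_conjTranspose_same U
  rwa [← Matrix.star_eq_conjTranspose] at this

lemma trace_eq_sum_eig' {n : ℕ} {A : Matrix (Fin n) (Fin n) ℝ} (hA : A.IsHermitian) :
    A.trace = ∑ i, hA.eigenvalues i := by
  nth_rewrite 1 [hA.spectral_theorem]
  rw [Unitary.conjStarAlgAut_apply]
  rw [Matrix.trace_mul_cycle]
  have hUU : star (hA.eigenvectorUnitary : Matrix (Fin n) (Fin n) ℝ) *
      (hA.eigenvectorUnitary : Matrix (Fin n) (Fin n) ℝ) = 1 :=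
    Matrix.mem_unitaryGroup_iff'.mp hA.eigenvectorUnitary.2
  rw [hUU, one_mul, Matrix.trace_diagonal]
  rfl

theorem stmt_6 {n : ℕ} (hn : 0 < n) (A B : Matrix (Fin n) (Fin n) ℝ)
    (hA : A.PosSemidef) (hA1 : ∀ i, hA.1.eigenvalues i ≤ 1)
    (hB : B.PosSemidef) :
    Real.log ((1 + A * B).det) ≤ n * Real.log (1 + B.trace / n) := by
  have hnR : (0:ℝ) < n := Nat.cast_pos.mpr hn
  set M : Matrix (Fin n) (Fin n) ℝ := CFC.sqrt A * B * CFC.sqrt A with hMdef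
  have hM : M.PosSemidef := by
    have := hB.mul_mul_conjTranspose_same (CFC.sqrt A)
    rwa [(CFC.sqrt_nonneg A).posSemidef.1.eq] at this
  have hdet : (1 + A * B).det = (1 + M).det := by
    have h1 : A * B = CFC.sqrt A * (CFC.sqrt A * B) := by rw [← mul_assoc, CFC.sqrt_mul_sqrt_self A hA.nonneg]
    rw [h1, Matrix.det_one_add_mul_comm]
  have hone : (1 : Matrix (Fin n) (Fin n) ℝ).PosDef := by
    rw [← Matrix.diagonal_one]
    exact Matrix.posDef_diagonal_iff.mpr (fun i => one_pos)
  have hpd : (1 + M).PosDef := hone.add_posSemidef hM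
  set ν : Fin n → ℝ := hpd.1.eigenvalues with hν
  have hνpos : ∀ i, 0 < ν i := hpd.eigenvalues_pos
  -- trace facts
  have htrM : 0 ≤ M.trace := psd_trace_nonneg' hM
  have htrMB : M.trace ≤ B.trace := by
    have h1 : M.trace = (A * B).trace := by
      rw [hMdef, Matrix.trace_mul_cycle, CFC.sqrt_mul_sqrt_self A hA.nonneg]
    have h2 : 0 ≤ ((1 - A) * B).trace := trace_mul_nonneg' (one_sub_psd' hA hA1) hB
    rw [Matrix.sub_mul, Matrix.trace_sub, one_mul] at h2
    linarith [h1 ▸ (by linarith : (0:ℝ) ≤ B.trace - (A * B).trace)]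
  have hsum : ∑ i, ν i = n + M.trace := by
    have := trace_eq_sum_eig' hpd.1
    rw [Matrix.trace_add, Matrix.trace_one] at this
    simp only [Fintype.card_fin, ← hν] at this
    linarith [this]
  -- det in terms of eigenvalues
  have hdet2 : (1 + M).det = ∏ i, ν i := by
    have := hpd.1.det_eq_prod_eigenvalues
    simpa using this
  -- Jensen
  have hjensen : ∑ i, (n:ℝ)⁻¹ • Real.log (ν i) ≤ Real.log (∑ i, (n:ℝ)⁻¹ • ν i) := by
    apply (strictConcaveOn_log_Ioi.concaveOn).le_map_sum
    · intro i _; positivity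
    · simp [Finset.sum_const, Finset.card_univ]
      field_simp
    · intro i _; exact hνpos i
  have hlogprod : Real.log (∏ i, ν i) = ∑ i, Real.log (ν i) :=
    Real.log_prod (fun i _ => (hνpos i).ne')
  have key : Real.log ((1 + A * B).det) = ∑ i, Real.log (ν i) := by
    rw [hdet, hdet2, hlogprod]
  rw [key]
  have h2 : ∑ i, Real.log (ν i) ≤ n * Real.log (∑ i, (n:ℝ)⁻¹ • ν i) := by
    have := mul_le_mul_of_nonneg_left hjensen hnR.le
    rw [Finset.mul_sum] at this
    simpa [smul_eq_mul, ← mul_assoc, mul_inv_cancel₀ hnR.ne'] using this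
  refine h2.trans ?_
  apply mul_le_mul_of_nonneg_left _ hnR.le
  apply Real.log_le_log
  · have : ∑ i, (n:ℝ)⁻¹ • ν i = (n:ℝ)⁻¹ * (n + M.trace) := by
      rw [← Finset.smul_sum, hsum]; rfl
    rw [this]; positivity
  · have : ∑ i, (n:ℝ)⁻¹ • ν i = (n:ℝ)⁻¹ * (n + M.trace) := by
      rw [← Finset.smul_sum, hsum]; rfl
    rw [this]
    rw [mul_add, inv_mul_cancel₀ hnR.ne']
    have : (n:ℝ)⁻¹ * M.trace ≤ B.trace / n := by
      rw [div_eq_inv_mul]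
      exact mul_le_mul_of_nonneg_left htrMB (by positivity)
    linarith
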